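/- Let n ≥ 1 and 1 < r < ∞. There exists a constant C = C(n, r) > 0 such that for all t₁, t₂ > 0 and all x ∈ ℝⁿ, ( ∫₀^∞ ∫₀^∞ ( t₁ t₂ s₁ s₂ / (t₁ + t₂ + s₁ + s₂ + |x|)^{n+4} )^{r} ds₁/s₁ · ds₂/s₂ )^{1/r} ≤ C · t₁ t₂ / (t₁ + t₂ + |x|)^{n+2}. -/

import Mathlib

open MeasureTheory Set
open scoped ENNReal

private lemma aux_one_dim (r : ℝ) (hr : 1 < r) (A : ℝ) (hA : 0 < A) :
    ∫⁻ s in Ioi (0:ℝ), ENNReal.ofReal ((s / (A + s) ^ 2) ^ r / s) ≤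
      ENNReal.ofReal (2 / (r * A ^ r)) := by
  have h0r : (0:ℝ) < r := lt_trans one_pos hr
  rw [← Ioc_union_Ioi_eq_Ioi hA.le,
    lintegral_union measurableSet_Ioi (Ioc_disjoint_Ioi le_rfl)]
  have hval : 1 / (r * A ^ r) + 1 / (r * A ^ r) = 2 / (r * A ^ r) := by ring
  rw [← hval, ENNReal.ofReal_add (by positivity) (by positivity)]
  gcongr
  · -- Ioc part
    calc ∫⁻ s in Ioc 0 A, ENNReal.ofReal ((s / (A + s) ^ 2) ^ r / s)
        ≤ ∫⁻ s in Ioc 0 A, ENNReal.ofReal (s ^ (r - 1) / A ^ (2 * r)) := by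
          apply setLIntegral_mono' measurableSet_Ioc
          intro s hs
          apply ENNReal.ofReal_le_ofReal
          have hs0 : (0:ℝ) < s := hs.1
          have h1 : (s / (A + s) ^ 2) ^ r ≤ s ^ r / A ^ (2 * r) := by
            have h2 : (s / (A + s) ^ 2) ^ r ≤ (s / A ^ 2) ^ r := by
              apply Real.rpow_le_rpow (by positivity) _ h0r.le
              gcongr <;> linarith
            calc (s / (A + s) ^ 2) ^ r ≤ (s / A ^ 2) ^ r := h2
              _ = s ^ r / A ^ (2 * r) := by
                  rw [Real.div_rpow hs0.le (by positivity),
                    ← Real.rpow_natCast A 2, ← Real.rpow_mul hA.le]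
                  norm_num
          calc (s / (A + s) ^ 2) ^ r / s ≤ s ^ r / A ^ (2 * r) / s := by gcongr
            _ = s ^ (r - 1) / A ^ (2 * r) := by
                rw [Real.rpow_sub hs0, Real.rpow_one]; ring
      _ = ENNReal.ofReal (∫ s in Ioc 0 A, s ^ (r - 1) / A ^ (2 * r)) := by
          rw [ofReal_integral_eq_lintegral_ofReal]
          · exact Integrable.div_const
              ((intervalIntegral.intervalIntegrable_rpow' (by linarith)).1) _
          · exact ae_restrict_of_forall_mem measurableSet_Ioc
              fun s hs => by have := hs.1; positivity
      _ ≤ ENNReal.ofReal (1 / (r * A ^ r)) := by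
          apply ENNReal.ofReal_le_ofReal
          rw [integral_div]
          have : ∫ s in Ioc 0 A, s ^ (r - 1) = A ^ r / r := by
            rw [← intervalIntegral.integral_of_le hA.le,
              integral_rpow (Or.inl (by linarith))]
            rw [sub_add_cancel, Real.zero_rpow h0r.ne']
            ring
          rw [this]
          have hAA : A ^ (2 * r) = A ^ r * A ^ r := by
            rw [← Real.rpow_add hA]; ring_nf
          rw [hAA]
          apply le_of_eq
          have hAr : (0:ℝ) < A ^ r := Real.rpow_pos_of_pos hA r
          field_simp
  · -- Ioi part
    calc ∫⁻ s in Ioi A, ENNReal.ofReal ((s / (A + s) ^ 2) ^ r / s)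
        ≤ ∫⁻ s in Ioi A, ENNReal.ofReal (s ^ (-r - 1)) := by
          apply setLIntegral_mono' measurableSet_Ioi
          intro s hs
          apply ENNReal.ofReal_le_ofReal
          have hs0 : (0:ℝ) < s := hA.trans hs
          have h1 : (s / (A + s) ^ 2) ^ r ≤ s ^ (-r) := by
            have h2 : (s / (A + s) ^ 2) ^ r ≤ (s / s ^ 2) ^ r := by
              apply Real.rpow_le_rpow (by positivity) _ h0r.le
              gcongr <;> nlinarith
            have h3 : s / s ^ 2 = s ^ (-1 : ℝ) := by
              rw [Real.rpow_neg_one]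
              field_simp
            calc (s / (A + s) ^ 2) ^ r ≤ (s / s ^ 2) ^ r := h2
              _ = s ^ (-r) := by
                  rw [h3, ← Real.rpow_mul hs0.le]
                  norm_num
          calc (s / (A + s) ^ 2) ^ r / s ≤ s ^ (-r) / s := by gcongr
            _ = s ^ (-r - 1) := by
                rw [Real.rpow_sub hs0, Real.rpow_one]
      _ = ENNReal.ofReal (∫ s in Ioi A, s ^ (-r - 1)) := by
          rw [ofReal_integral_eq_lintegral_ofReal]
          · exact integrableOn_Ioi_rpow_of_lt (by linarith) hA
          · exact ae_restrict_of_forall_mem measurableSet_Ioi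
              fun s hs => Real.rpow_nonneg (hA.trans hs).le _
      _ ≤ ENNReal.ofReal (1 / (r * A ^ r)) := by
          apply ENNReal.ofReal_le_ofReal
          rw [integral_Ioi_rpow_of_lt (by linarith) hA]
          have : -r - 1 + 1 = -r := by ring
          rw [this, Real.rpow_neg hA.le]
          apply le_of_eq
          have hAr : (0:ℝ) < A ^ r := Real.rpow_pos_of_pos hA r
          field_simp

private lemma aux_ptwise (n : ℕ) (r t₁ t₂ A s₁ s₂ : ℝ) (hr : 0 < r)
    (ht₁ : 0 < t₁) (ht₂ : 0 < t₂) (hA : 0 < A) (hs₁ : 0 < s₁) (hs₂ : 0 < s₂) :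
    (t₁ * t₂ * s₁ * s₂ / (A + s₁ + s₂) ^ (n + 4)) ^ r / (s₁ * s₂) ≤
      (t₁ * t₂ / A ^ n) ^ r * ((s₁ / (A + s₁) ^ 2) ^ r / s₁) *
        ((s₂ / (A + s₂) ^ 2) ^ r / s₂) := by
  have hbase : t₁ * t₂ * s₁ * s₂ / (A + s₁ + s₂) ^ (n + 4) ≤
      t₁ * t₂ / A ^ n * (s₁ / (A + s₁) ^ 2) * (s₂ / (A + s₂) ^ 2) := by
    rw [div_mul_div_comm, div_mul_div_comm]
    have hpow : A ^ n * (A + s₁) ^ 2 * (A + s₂) ^ 2 ≤ (A + s₁ + s₂) ^ (n + 4) := by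
      have : (A + s₁ + s₂) ^ (n + 4) =
          (A + s₁ + s₂) ^ n * (A + s₁ + s₂) ^ 2 * (A + s₁ + s₂) ^ 2 := by
        rw [← pow_add, ← pow_add]
      rw [this]
      have e1 : A ^ n ≤ (A + s₁ + s₂) ^ n := pow_le_pow_left₀ hA.le (by linarith) n
      have e2 : (A + s₁) ^ 2 ≤ (A + s₁ + s₂) ^ 2 := pow_le_pow_left₀ (by linarith) (by linarith) 2
      have e3 : (A + s₂) ^ 2 ≤ (A + s₁ + s₂) ^ 2 := pow_le_pow_left₀ (by linarith) (by linarith) 2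
      exact mul_le_mul (mul_le_mul e1 e2 (by positivity) (by positivity)) e3
        (by positivity) (by positivity)
    gcongr
  have h1 : (t₁ * t₂ * s₁ * s₂ / (A + s₁ + s₂) ^ (n + 4)) ^ r ≤
      (t₁ * t₂ / A ^ n * (s₁ / (A + s₁) ^ 2) * (s₂ / (A + s₂) ^ 2)) ^ r :=
    Real.rpow_le_rpow (by positivity) hbase hr.le
  have h2 : (t₁ * t₂ / A ^ n * (s₁ / (A + s₁) ^ 2) * (s₂ / (A + s₂) ^ 2)) ^ r =
      (t₁ * t₂ / A ^ n) ^ r * (s₁ / (A + s₁) ^ 2) ^ r * (s₂ / (A + s₂) ^ 2) ^ r := by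
    rw [Real.mul_rpow (by positivity) (by positivity),
      Real.mul_rpow (by positivity) (by positivity)]
  calc (t₁ * t₂ * s₁ * s₂ / (A + s₁ + s₂) ^ (n + 4)) ^ r / (s₁ * s₂)
      ≤ (t₁ * t₂ / A ^ n) ^ r * (s₁ / (A + s₁) ^ 2) ^ r * (s₂ / (A + s₂) ^ 2) ^ r
          / (s₁ * s₂) := by rw [← h2]; gcongr
    _ = (t₁ * t₂ / A ^ n) ^ r * ((s₁ / (A + s₁) ^ 2) ^ r / s₁) *
        ((s₂ / (A + s₂) ^ 2) ^ r / s₂) := by ring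

private lemma aux_keyeq (n : ℕ) (r t A : ℝ) (hr : 0 < r) (ht : 0 < t) (hA : 0 < A) :
    (t / A ^ n) ^ r * (2 / (r * A ^ r)) * (2 / (r * A ^ r)) =
      ((2 / r) ^ (2 / r) * (t / A ^ (n + 2))) ^ r := by
  have hAr : (0:ℝ) < A ^ r := Real.rpow_pos_of_pos hA r
  have hAn : (0:ℝ) < A ^ n := pow_pos hA n
  rw [Real.mul_rpow (by positivity) (by positivity)]
  have h1 : ((2 / r) ^ (2 / r : ℝ)) ^ r = (2 / r) ^ (2 : ℕ) := by
    rw [← Real.rpow_mul (by positivity), div_mul_cancel₀ _ hr.ne',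
      ← Real.rpow_natCast (2 / r) 2]
    norm_num
  rw [h1]
  rw [Real.div_rpow ht.le (by positivity), Real.div_rpow ht.le (by positivity)]
  have h2a : ((A ^ 2 : ℝ)) ^ r = A ^ r * A ^ r := by
    rw [← Real.rpow_natCast A 2, ← Real.rpow_mul hA.le,
      show ((2:ℕ):ℝ) * r = r + r by push_cast; ring, Real.rpow_add hA]
  have h2 : ((A ^ (n + 2) : ℝ)) ^ r = (A ^ n : ℝ) ^ r * A ^ r * A ^ r := by
    rw [pow_add, Real.mul_rpow (by positivity) (by positivity), h2a, mul_assoc]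
  rw [h2]
  have hAnr : (0:ℝ) < (A ^ n : ℝ) ^ r := Real.rpow_pos_of_pos hAn r
  field_simp

/-- For `n ≥ 1` and `1 < r < ∞` there is `C = C(n,r) > 0` such that for all
`t₁, t₂ > 0` and all `x ∈ ℝⁿ`,
`(∫₀^∞∫₀^∞ (t₁t₂s₁s₂/(t₁+t₂+s₁+s₂+|x|)^{n+4})^r ds₁/s₁ ds₂/s₂)^{1/r}
  ≤ C t₁t₂/(t₁+t₂+|x|)^{n+2}`. -/
theorem stmt_16 (n : ℕ) (hn : 1 ≤ n) (r : ℝ) (hr : 1 < r) :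
    ∃ C : ℝ, 0 < C ∧ ∀ t₁ t₂ : ℝ, 0 < t₁ → 0 < t₂ → ∀ x : EuclideanSpace ℝ (Fin n),
      (∫⁻ s₁ in Ioi (0 : ℝ), ∫⁻ s₂ in Ioi (0 : ℝ),
          ENNReal.ofReal
            ((t₁ * t₂ * s₁ * s₂ / (t₁ + t₂ + s₁ + s₂ + ‖x‖) ^ (n + 4)) ^ r /
              (s₁ * s₂))) ^ (1 / r) ≤
        ENNReal.ofReal (C * (t₁ * t₂) / (t₁ + t₂ + ‖x‖) ^ (n + 2)) := by
  have h0r : (0:ℝ) < r := lt_trans one_pos hr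
  refine ⟨(2 / r) ^ (2 / r : ℝ), Real.rpow_pos_of_pos (by positivity) _, ?_⟩
  intro t₁ t₂ ht₁ ht₂ x
  set A : ℝ := t₁ + t₂ + ‖x‖ with hAdef
  have hA : 0 < A := by positivity
  set g : ℝ → ℝ := fun s => (s / (A + s) ^ 2) ^ r / s with hgdef
  set c : ℝ := (t₁ * t₂ / A ^ n) ^ r with hcdef
  set m : ℝ := 2 / (r * A ^ r) with hmdef
  have hc : 0 ≤ c := Real.rpow_nonneg (by positivity) _
  have hm : 0 ≤ m := by positivity
  have hg : ∀ s, 0 < s → 0 ≤ g s := fun s hs => by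
    simp only [hgdef]; positivity
  have hgint : ∀ s₁ : ℝ, ∫⁻ s in Ioi (0:ℝ), ENNReal.ofReal (g s) ≤
      ENNReal.ofReal m := fun _ => aux_one_dim r hr A hA
  have key : (∫⁻ s₁ in Ioi (0 : ℝ), ∫⁻ s₂ in Ioi (0 : ℝ),
      ENNReal.ofReal
        ((t₁ * t₂ * s₁ * s₂ / (t₁ + t₂ + s₁ + s₂ + ‖x‖) ^ (n + 4)) ^ r /
          (s₁ * s₂))) ≤ ENNReal.ofReal (c * m * m) := by
    calc (∫⁻ s₁ in Ioi (0 : ℝ), ∫⁻ s₂ in Ioi (0 : ℝ),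
        ENNReal.ofReal
          ((t₁ * t₂ * s₁ * s₂ / (t₁ + t₂ + s₁ + s₂ + ‖x‖) ^ (n + 4)) ^ r /
            (s₁ * s₂)))
        ≤ ∫⁻ s₁ in Ioi (0 : ℝ),
            (ENNReal.ofReal c * ENNReal.ofReal m) * ENNReal.ofReal (g s₁) := by
          apply setLIntegral_mono' measurableSet_Ioi
          intro s₁ hs₁
          have hs₁0 : (0:ℝ) < s₁ := hs₁
          calc ∫⁻ s₂ in Ioi (0 : ℝ), ENNReal.ofReal
                ((t₁ * t₂ * s₁ * s₂ / (t₁ + t₂ + s₁ + s₂ + ‖x‖) ^ (n + 4)) ^ r /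
                  (s₁ * s₂))
              ≤ ∫⁻ s₂ in Ioi (0 : ℝ),
                  (ENNReal.ofReal c * ENNReal.ofReal (g s₁)) * ENNReal.ofReal (g s₂) := by
                apply setLIntegral_mono' measurableSet_Ioi
                intro s₂ hs₂
                have hs₂0 : (0:ℝ) < s₂ := hs₂
                rw [← ENNReal.ofReal_mul hc, ← ENNReal.ofReal_mul (by positivity)]
                apply ENNReal.ofReal_le_ofReal
                have heq : t₁ + t₂ + s₁ + s₂ + ‖x‖ = A + s₁ + s₂ := by
                  rw [hAdef]; ring
                rw [heq]
                exact aux_ptwise n r t₁ t₂ A s₁ s₂ h0r ht₁ ht₂ hA hs₁0 hs₂0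
            _ = (ENNReal.ofReal c * ENNReal.ofReal (g s₁)) *
                  ∫⁻ s₂ in Ioi (0:ℝ), ENNReal.ofReal (g s₂) :=
                lintegral_const_mul' _ _ (by finiteness)
            _ ≤ (ENNReal.ofReal c * ENNReal.ofReal (g s₁)) * ENNReal.ofReal m :=
                mul_le_mul_right (hgint s₁) _
            _ = (ENNReal.ofReal c * ENNReal.ofReal m) * ENNReal.ofReal (g s₁) := by
                ring
      _ = (ENNReal.ofReal c * ENNReal.ofReal m) *
            ∫⁻ s₁ in Ioi (0:ℝ), ENNReal.ofReal (g s₁) :=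
          lintegral_const_mul' _ _ (by finiteness)
      _ ≤ (ENNReal.ofReal c * ENNReal.ofReal m) * ENNReal.ofReal m :=
          mul_le_mul_right (hgint 0) _
      _ = ENNReal.ofReal (c * m * m) := by
          rw [ENNReal.ofReal_mul (by positivity), ENNReal.ofReal_mul hc]
  have hkeyeq : c * m * m = ((2 / r) ^ (2 / r : ℝ) * (t₁ * t₂ / A ^ (n + 2))) ^ r :=
    aux_keyeq n r (t₁ * t₂) A h0r (by positivity) hA
  calc (∫⁻ s₁ in Ioi (0 : ℝ), ∫⁻ s₂ in Ioi (0 : ℝ),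
      ENNReal.ofReal
        ((t₁ * t₂ * s₁ * s₂ / (t₁ + t₂ + s₁ + s₂ + ‖x‖) ^ (n + 4)) ^ r /
          (s₁ * s₂))) ^ (1 / r)
      ≤ (ENNReal.ofReal (((2 / r) ^ (2 / r : ℝ) * (t₁ * t₂ / A ^ (n + 2))) ^ r)) ^ (1 / r) := by
        rw [← hkeyeq]
        exact ENNReal.rpow_le_rpow key (by positivity)
    _ = ENNReal.ofReal ((((2 / r) ^ (2 / r : ℝ) * (t₁ * t₂ / A ^ (n + 2))) ^ r) ^ (1 / r : ℝ)) :=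
        ENNReal.ofReal_rpow_of_nonneg (Real.rpow_nonneg (by positivity) _) (by positivity)
    _ = ENNReal.ofReal ((2 / r) ^ (2 / r : ℝ) * (t₁ * t₂) / A ^ (n + 2)) := by
        rw [one_div, Real.rpow_rpow_inv (by positivity) h0r.ne']
        congr 1
        ring
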